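/- Under the preconditioner setup: κ( P̂^{-1/2} (A + μI) P̂^{-1/2} ) ≥ max{ 1, (λ̂_k + μ − ‖ℰ‖₂)/(μ + λ_min(A)) }. -/

import Mathlib

open Matrix

/-- The spectral norm (largest singular value) of a real matrix,
as the `ℓ²→ℓ²` operator norm. -/
noncomputable def spectralNorm2 {m n : ℕ} (M : Matrix (Fin m) (Fin n) ℝ) : ℝ :=
  ‖LinearMap.toContinuousLinearMap (Matrix.toEuclideanLin M)‖

/-- The positive semidefinite square root of a positive semidefinite matrix
(`Matrix.PosSemidef.sqrt` of the older Mathlib, with its old definition). -/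
noncomputable def Matrix.PosSemidef.sqrt {n : Type*} [Fintype n] [DecidableEq n]
    {A : Matrix n n ℝ} (hA : A.PosSemidef) : Matrix n n ℝ :=
  hA.1.eigenvectorUnitary.1 * diagonal ((↑) ∘ (√·) ∘ hA.1.eigenvalues) *
    (star hA.1.eigenvectorUnitary : Matrix n n ℝ)

/-- The largest eigenvalue of a real symmetric matrix, as the supremum of the
Rayleigh quotient over the unit sphere. -/
noncomputable def lmax {n : ℕ} (M : Matrix (Fin n) (Fin n) ℝ) : ℝ :=
  ⨆ x : Metric.sphere (0 : EuclideanSpace ℝ (Fin n)) 1,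
    (inner ℝ (x : EuclideanSpace ℝ (Fin n))
      (Matrix.toEuclideanLin M (x : EuclideanSpace ℝ (Fin n))) : ℝ)

/-- The smallest eigenvalue of a real symmetric matrix, as the infimum of the
Rayleigh quotient over the unit sphere. -/
noncomputable def lmin {n : ℕ} (M : Matrix (Fin n) (Fin n) ℝ) : ℝ :=
  ⨅ x : Metric.sphere (0 : EuclideanSpace ℝ (Fin n)) 1,
    (inner ℝ (x : EuclideanSpace ℝ (Fin n))
      (Matrix.toEuclideanLin M (x : EuclideanSpace ℝ (Fin n))) : ℝ)

lemma Matrix.PosSemidef.posSemidef_sqrt {n : Type*} [Fintype n] [DecidableEq n]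
    {A : Matrix n n ℝ} (hA : A.PosSemidef) : hA.sqrt.PosSemidef := by
  unfold Matrix.PosSemidef.sqrt
  have h := (Matrix.posSemidef_diagonal_iff.mpr (fun i => by
    simp [Real.sqrt_nonneg] :
      ∀ i, 0 ≤ ((↑) ∘ (√·) ∘ hA.1.eigenvalues : n → ℝ) i)).mul_mul_conjTranspose_same
    (hA.1.eigenvectorUnitary : Matrix n n ℝ)
  exact h

lemma Matrix.PosSemidef.sqrt_mul_self {n : Type*} [Fintype n] [DecidableEq n]
    {A : Matrix n n ℝ} (hA : A.PosSemidef) : hA.sqrt * hA.sqrt = A := by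
  have hU : (star hA.1.eigenvectorUnitary : Matrix n n ℝ) * hA.1.eigenvectorUnitary.1 = 1 :=
    Unitary.star_mul_self_of_mem hA.1.eigenvectorUnitary.2
  have hD : diagonal ((↑) ∘ (√·) ∘ hA.1.eigenvalues) * diagonal ((↑) ∘ (√·) ∘ hA.1.eigenvalues)
      = diagonal (RCLike.ofReal ∘ hA.1.eigenvalues : n → ℝ) := by
    rw [diagonal_mul_diagonal]; congr 1; funext i
    simp [Real.mul_self_sqrt (hA.eigenvalues_nonneg i)]
  conv_rhs => rw [hA.1.spectral_theorem]
  rw [Unitary.conjStarAlgAut_apply]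
  unfold Matrix.PosSemidef.sqrt
  rw [show ∀ X Y Z : Matrix n n ℝ, X * Y * Z * (X * Y * Z) = X * (Y * (Z * X) * Y) * Z by
    intro X Y Z; simp only [Matrix.mul_assoc], hU, Matrix.mul_one, hD]

noncomputable def emb {n : ℕ} (v : Fin n → ℝ) : EuclideanSpace ℝ (Fin n) := (WithLp.equiv 2 _).symm v

lemma inner_emb {n : ℕ} (v w : Fin n → ℝ) : (inner ℝ (emb v) (emb w) : ℝ) = v ⬝ᵥ w := by
  simp [emb, PiLp.inner_apply, RCLike.inner_apply, dotProduct, mul_comm]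

lemma toEuc_emb {n m : ℕ} (M : Matrix (Fin m) (Fin n) ℝ) (v : Fin n → ℝ) :
    Matrix.toEuclideanLin M (emb v) = emb (M *ᵥ v) := by
  simp [emb, Matrix.toEuclideanLin_apply]

lemma norm_emb_one {n : ℕ} (v : Fin n → ℝ) (h : v ⬝ᵥ v = 1) : ‖emb v‖ = 1 := by
  have := inner_emb v v
  rw [h] at this
  have h2 : ‖emb v‖ ^ 2 = 1 := by rw [← real_inner_self_eq_norm_sq, this]
  nlinarith [norm_nonneg (emb v)]

section Rayleigh
variable {n : ℕ} (M : Matrix (Fin n) (Fin n) ℝ)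

noncomputable def ray {n : ℕ} (M : Matrix (Fin n) (Fin n) ℝ) (x : EuclideanSpace ℝ (Fin n)) : ℝ :=
  inner ℝ x (Matrix.toEuclideanLin M x)

lemma ray_cont : Continuous (ray M) := by
  have hT : Continuous (fun x : EuclideanSpace ℝ (Fin n) => Matrix.toEuclideanLin M x) :=
    LinearMap.continuous_of_finiteDimensional _
  exact continuous_id.inner hT

lemma sphere_ne (hn : 0 < n) : (Metric.sphere (0 : EuclideanSpace ℝ (Fin n)) 1).Nonempty := by
  haveI : Nonempty (Fin n) := ⟨⟨0, hn⟩⟩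
  haveI : Nontrivial (EuclideanSpace ℝ (Fin n)) := inferInstance
  exact NormedSpace.sphere_nonempty.mpr zero_le_one

lemma ray_bddAbove : BddAbove (Set.range fun x : Metric.sphere (0 : EuclideanSpace ℝ (Fin n)) 1 =>
    ray M (x : EuclideanSpace ℝ (Fin n))) := by
  rw [← Set.image_eq_range]
  exact ((isCompact_sphere _ _).image (ray_cont M)).bddAbove

lemma ray_bddBelow : BddBelow (Set.range fun x : Metric.sphere (0 : EuclideanSpace ℝ (Fin n)) 1 =>
    ray M (x : EuclideanSpace ℝ (Fin n))) := by
  rw [← Set.image_eq_range]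
  exact ((isCompact_sphere _ _).image (ray_cont M)).bddBelow

lemma le_lmax (x : EuclideanSpace ℝ (Fin n)) (hx : ‖x‖ = 1) : ray M x ≤ lmax M := by
  have hmem : x ∈ Metric.sphere (0 : EuclideanSpace ℝ (Fin n)) 1 := by
    simpa [Metric.mem_sphere, dist_zero_right] using hx
  exact le_ciSup (ray_bddAbove M) (⟨x, hmem⟩ : Metric.sphere (0 : EuclideanSpace ℝ (Fin n)) 1)

lemma lmin_le (x : EuclideanSpace ℝ (Fin n)) (hx : ‖x‖ = 1) : lmin M ≤ ray M x := by
  have hmem : x ∈ Metric.sphere (0 : EuclideanSpace ℝ (Fin n)) 1 := by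
    simpa [Metric.mem_sphere, dist_zero_right] using hx
  haveI : Nonempty (Metric.sphere (0 : EuclideanSpace ℝ (Fin n)) 1) := ⟨⟨x, hmem⟩⟩
  exact ciInf_le (ray_bddBelow M) (⟨x, hmem⟩ : Metric.sphere (0 : EuclideanSpace ℝ (Fin n)) 1)

lemma lmin_attained (hn : 0 < n) : ∃ x : EuclideanSpace ℝ (Fin n), ‖x‖ = 1 ∧ lmin M = ray M x := by
  haveI : Nonempty (Metric.sphere (0 : EuclideanSpace ℝ (Fin n)) 1) := (sphere_ne hn).to_subtype
  obtain ⟨x, hxmem, hx⟩ := (isCompact_sphere (0 : EuclideanSpace ℝ (Fin n)) 1).exists_isMinOn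
    (sphere_ne hn) (ray_cont M).continuousOn
  refine ⟨x, by simpa [Metric.mem_sphere, dist_zero_right] using hxmem, le_antisymm (lmin_le M x ?_) ?_⟩
  · simpa [Metric.mem_sphere, dist_zero_right] using hxmem
  · exact le_ciInf fun y => hx y.2
end Rayleigh

lemma dot_le_spectralNorm {n : ℕ} (N : Matrix (Fin n) (Fin n) ℝ) (v : Fin n → ℝ)
    (hv : v ⬝ᵥ v = 1) : |v ⬝ᵥ (N *ᵥ v)| ≤ spectralNorm2 N := by
  have hx : ‖emb v‖ = 1 := norm_emb_one v hv
  have h1 : v ⬝ᵥ (N *ᵥ v) = (inner ℝ (emb v) (Matrix.toEuclideanLin N (emb v)) : ℝ) := by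
    rw [toEuc_emb, inner_emb]
  rw [h1]
  calc |(inner ℝ (emb v) (Matrix.toEuclideanLin N (emb v)) : ℝ)|
      ≤ ‖emb v‖ * ‖Matrix.toEuclideanLin N (emb v)‖ := abs_real_inner_le_norm _ _
    _ = ‖(LinearMap.toContinuousLinearMap (Matrix.toEuclideanLin N)) (emb v)‖ := by
        rw [hx, one_mul]; rfl
    _ ≤ spectralNorm2 N * ‖emb v‖ :=
        ContinuousLinearMap.le_opNorm _ _
    _ = spectralNorm2 N := by rw [hx, mul_one]

lemma symm_dot {n : ℕ} {S : Matrix (Fin n) (Fin n) ℝ} (hS : S.IsHermitian)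
    (u y : Fin n → ℝ) : u ⬝ᵥ (S *ᵥ y) = (S *ᵥ u) ⬝ᵥ y := by
  have hT : Sᵀ = S := by
    have := hS.eq
    rwa [Matrix.conjTranspose_eq_transpose_of_trivial] at this
  rw [Matrix.dotProduct_mulVec, ← Matrix.mulVec_transpose, hT]

lemma posdef_vec_ne {n : ℕ} {P : Matrix (Fin n) (Fin n) ℝ} (hP : P.PosDef)
    {w : Fin n → ℝ} (hw : P *ᵥ w = 0) : w = 0 := by
  by_contra h
  have := hP.dotProduct_mulVec_pos h
  rw [hw] at this
  simp at this

lemma sqrt_fix {n : ℕ} {P : Matrix (Fin n) (Fin n) ℝ} (hP : P.PosSemidef)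
    (u : Fin n → ℝ) (hu : P *ᵥ u = u) : hP.sqrt *ᵥ u = u := by
  set S := hP.sqrt with hSdef
  have hS : S.PosSemidef := hP.posSemidef_sqrt
  have hSS : S * S = P := hP.sqrt_mul_self
  have hpd : (S + 1).PosDef := Matrix.PosDef.posSemidef_add hS Matrix.PosDef.one
  have hw : (S + 1) *ᵥ (S *ᵥ u - u) = 0 := by
    rw [Matrix.add_mulVec, Matrix.mulVec_sub, Matrix.mulVec_mulVec, hSS, hu,
      Matrix.mulVec_sub, Matrix.one_mulVec, Matrix.one_mulVec]
    abel
  have h2 : S *ᵥ u - u = 0 := posdef_vec_ne hpd hw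
  have := sub_eq_zero.mp h2
  exact this

lemma ray_emb {n : ℕ} (M : Matrix (Fin n) (Fin n) ℝ) (v : Fin n → ℝ) :
    ray M (emb v) = v ⬝ᵥ (M *ᵥ v) := by
  unfold ray
  rw [toEuc_emb, inner_emb]

lemma emb_equiv {n : ℕ} (x : EuclideanSpace ℝ (Fin n)) : emb (WithLp.equiv 2 (Fin n → ℝ) x) = x := by
  simp [emb]


/-- Preconditioner setup: `n > k ≥ 1`, `A` real symmetric with `A + μI` positive
definite (`μ ≥ 0`), `Û` with orthonormal columns (`ÛᵀÛ = I`),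
`Θ̂ = diag(λ̂_1,…,λ̂_k)` with `λ̂_1 ≥ … ≥ λ̂_k > 0`, `Â_N = Û Θ̂ Ûᵀ`,
`A = Â_N + E + ℰ` with `E, ℰ` symmetric and `E` positive semidefinite, and
`P̂⁻¹ = I − ÛÛᵀ + (λ̂_k + μ) Û (Θ̂ + μI)⁻¹ Ûᵀ`, which is symmetric positive definite;
`P̂^{-1/2}` is its positive semidefinite square root.
Then `κ(P̂^{-1/2}(A + μI)P̂^{-1/2}) ≥ max {1, (λ̂_k + μ − ‖ℰ‖₂)/(μ + λ_min(A))}`. -/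
theorem stmt11 {n k : ℕ} (hk : 1 ≤ k) (hkn : k < n)
    (A : Matrix (Fin n) (Fin n) ℝ) (hA : A.IsHermitian)
    (μ : ℝ) (hμ : 0 ≤ μ) (hAμ : (A + μ • 1).PosDef)
    (U : Matrix (Fin n) (Fin k) ℝ) (hU : Uᵀ * U = 1)
    (lamh : Fin k → ℝ) (hlamh : Antitone lamh) (hlamhk : 0 < lamh ⟨k - 1, by omega⟩)
    (E Err : Matrix (Fin n) (Fin n) ℝ) (hE : E.IsHermitian) (hErr : Err.IsHermitian)
    (hEpsd : E.PosSemidef)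
    (hsum : A = U * Matrix.diagonal lamh * Uᵀ + E + Err)
    (hPinvPD : ((1 : Matrix (Fin n) (Fin n) ℝ) - U * Uᵀ +
      (lamh ⟨k - 1, by omega⟩ + μ) • (U * (Matrix.diagonal lamh + μ • 1)⁻¹ * Uᵀ)).PosDef)
     :
    let S := hPinvPD.posSemidef.sqrt
    let M := S * (A + μ • 1) * S
    max 1 ((lamh ⟨k - 1, by omega⟩ + μ - spectralNorm2 Err) / (μ + lmin A)) ≤
      lmax M / lmin M := by
  intro S M
  have hn : 0 < n := by omega
  set κi : Fin k := ⟨k - 1, by omega⟩ with hκi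
  set lk : ℝ := lamh κi with hlk
  set Dinv : Matrix (Fin k) (Fin k) ℝ := (Matrix.diagonal lamh + μ • 1)⁻¹ with hDinv
  set Pinv : Matrix (Fin n) (Fin n) ℝ :=
    (1 : Matrix (Fin n) (Fin n) ℝ) - U * Uᵀ + (lk + μ) • (U * Dinv * Uᵀ) with hPinv
  -- basic positivity
  have hlam_ge : ∀ j, lk ≤ lamh j := fun j => hlamh (by
    show j ≤ κi
    exact Fin.mk_le_mk.mpr (by omega) |>.trans_eq rfl |>.trans_eq rfl |>.trans_eq rfl)
  have hdpos : ∀ j, 0 < lamh j + μ := fun j =>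
    add_pos_of_pos_of_nonneg (lt_of_lt_of_le hlamhk (hlam_ge j)) hμ
  have hlkμ : 0 < lk + μ := add_pos_of_pos_of_nonneg hlamhk hμ
  -- diagonal inverse
  have hDsum : Matrix.diagonal lamh + μ • (1 : Matrix (Fin k) (Fin k) ℝ) =
      Matrix.diagonal (fun j => lamh j + μ) := by
    ext i j
    by_cases h : i = j <;> simp [Matrix.diagonal_apply, Matrix.one_apply, h]
  have hDinv_eq : Dinv = Matrix.diagonal (fun j => (lamh j + μ)⁻¹) := by
    rw [hDinv, hDsum]
    apply Matrix.inv_eq_right_inv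
    rw [Matrix.diagonal_mul_diagonal]
    have : (fun j => (lamh j + μ) * (lamh j + μ)⁻¹) = fun _ : Fin k => (1 : ℝ) :=
      funext fun j => mul_inv_cancel₀ (hdpos j).ne'
    rw [this]
    exact Matrix.diagonal_one
  -- the distinguished vector
  set e : Fin k → ℝ := Pi.single κi 1 with he
  set u : Fin n → ℝ := U *ᵥ e with hu
  have hUtu : Uᵀ *ᵥ u = e := by
    rw [hu, Matrix.mulVec_mulVec, hU, Matrix.one_mulVec]
  have hee : e ⬝ᵥ e = 1 := by
    simp [he, dotProduct, Pi.single_apply]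
  have huu : u ⬝ᵥ u = 1 := by
    calc u ⬝ᵥ u = u ⬝ᵥ (U *ᵥ e) := by rw [← hu]
      _ = (Uᵀ *ᵥ u) ⬝ᵥ e := by rw [Matrix.dotProduct_mulVec, Matrix.mulVec_transpose]
      _ = e ⬝ᵥ e := by rw [hUtu]
      _ = 1 := hee
  have hUUu : (U * Uᵀ) *ᵥ u = u := by
    rw [← Matrix.mulVec_mulVec, hUtu, ← hu]
  have hDinvE : Matrix.diagonal (fun j => (lamh j + μ)⁻¹) *ᵥ e = (lk + μ)⁻¹ • e := by
    ext i
    by_cases h : i = κi <;>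
      simp [he, Matrix.mulVec_diagonal, Pi.single_apply, h, hlk]
  have hDu : (U * Dinv * Uᵀ) *ᵥ u = (lk + μ)⁻¹ • u := by
    rw [← Matrix.mulVec_mulVec, hUtu, ← Matrix.mulVec_mulVec, hDinv_eq, hDinvE,
      Matrix.mulVec_smul, ← hu]
  have hPu : Pinv *ᵥ u = u := by
    rw [hPinv, Matrix.add_mulVec, Matrix.sub_mulVec, Matrix.one_mulVec, hUUu,
      Matrix.smul_mulVec, hDu, smul_smul, mul_inv_cancel₀ hlkμ.ne', one_smul]
    abel
  have hSu : S *ᵥ u = u := sqrt_fix hPinvPD.posSemidef u hPu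
  have hSH : S.IsHermitian := hPinvPD.posSemidef.posSemidef_sqrt.1
  have hSS : S * S = Pinv := hPinvPD.posSemidef.sqrt_mul_self
  -- quadratic form identities
  have hMdot : ∀ w : Fin n → ℝ, w ⬝ᵥ (M *ᵥ w) = (S *ᵥ w) ⬝ᵥ ((A + μ • 1) *ᵥ (S *ᵥ w)) := by
    intro y
    show y ⬝ᵥ ((S * (A + μ • 1) * S) *ᵥ y) = _
    rw [← Matrix.mulVec_mulVec, ← Matrix.mulVec_mulVec, symm_dot hSH]
  have hquadMu : u ⬝ᵥ (M *ᵥ u) = u ⬝ᵥ ((A + μ • 1) *ᵥ u) := by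
    rw [hMdot u, hSu]
  have hDlamE : Matrix.diagonal lamh *ᵥ e = lk • e := by
    ext i
    by_cases h : i = κi <;>
      simp [he, Matrix.mulVec_diagonal, Pi.single_apply, h, hlk]
  have hANu : (U * Matrix.diagonal lamh * Uᵀ) *ᵥ u = lk • u := by
    rw [← Matrix.mulVec_mulVec, hUtu, ← Matrix.mulVec_mulVec, hDlamE,
      Matrix.mulVec_smul, ← hu]
  have hAq : u ⬝ᵥ ((A + μ • 1) *ᵥ u) = lk + μ + u ⬝ᵥ (E *ᵥ u) + u ⬝ᵥ (Err *ᵥ u) := by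
    rw [hsum, Matrix.add_mulVec, Matrix.add_mulVec, Matrix.add_mulVec, hANu,
      Matrix.smul_mulVec, Matrix.one_mulVec]
    simp only [dotProduct_add, dotProduct_smul, smul_eq_mul, huu]
    ring
  have hE0 : 0 ≤ u ⬝ᵥ (E *ᵥ u) := by
    have := hEpsd.dotProduct_mulVec_nonneg u
    simpa using this
  have hErr0 : -spectralNorm2 Err ≤ u ⬝ᵥ (Err *ᵥ u) :=
    neg_le_of_neg_le (le_trans (neg_le_abs _) (by
      simpa [abs_neg] using dot_le_spectralNorm Err u huu))
  have hlmax : lk + μ - spectralNorm2 Err ≤ lmax M := by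
    have h1 : lk + μ - spectralNorm2 Err ≤ u ⬝ᵥ (M *ᵥ u) := by
      rw [hquadMu, hAq]; linarith
    calc lk + μ - spectralNorm2 Err ≤ u ⬝ᵥ (M *ᵥ u) := h1
      _ = ray M (emb u) := (ray_emb M u).symm
      _ ≤ lmax M := le_lmax M (emb u) (norm_emb_one u huu)
  -- lmin A attained
  obtain ⟨x, hx1, hxmin⟩ := lmin_attained A hn
  set v : Fin n → ℝ := WithLp.equiv 2 (Fin n → ℝ) x with hv
  have hvemb : emb v = x := emb_equiv x
  have hvv : v ⬝ᵥ v = 1 := by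
    have : (inner ℝ x x : ℝ) = 1 := by
      rw [real_inner_self_eq_norm_sq, hx1]; norm_num
    rw [← hvemb] at this
    rwa [inner_emb] at this
  have hvne : v ≠ 0 := by
    intro h; rw [h] at hvv; simp at hvv
  have hlminA : lmin A = v ⬝ᵥ (A *ᵥ v) := by
    rw [hxmin, ← hvemb, ray_emb]
  have haq : v ⬝ᵥ ((A + μ • 1) *ᵥ v) = μ + lmin A := by
    rw [Matrix.add_mulVec, Matrix.smul_mulVec, Matrix.one_mulVec,
      dotProduct_add, dotProduct_smul, smul_eq_mul, hvv, hlminA]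
    ring
  have hapos : 0 < μ + lmin A := by
    rw [← haq]
    have := hAμ.dotProduct_mulVec_pos hvne
    simpa using this
  -- S is invertible
  have hdet : IsUnit S.det := by
    have h := hPinvPD.det_pos
    rw [← hSS, Matrix.det_mul] at h
    exact isUnit_iff_ne_zero.mpr fun h0 => by rw [h0, mul_zero] at h; exact lt_irrefl 0 h
  set w : Fin n → ℝ := S⁻¹ *ᵥ v with hw
  have hSw : S *ᵥ w = v := by
    rw [hw, Matrix.mulVec_mulVec, Matrix.mul_nonsing_inv _ hdet, Matrix.one_mulVec]
  have hquadMw : w ⬝ᵥ (M *ᵥ w) = μ + lmin A := by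
    rw [hMdot w, hSw, haq]
  set c : ℝ := w ⬝ᵥ w with hc
  have hg0 : ∀ j, 0 ≤ 1 - (lk + μ) * (lamh j + μ)⁻¹ := by
    intro j
    have h1 : (lk + μ) * (lamh j + μ)⁻¹ ≤ 1 := by
      rw [← div_eq_mul_inv, div_le_one (hdpos j)]
      linarith [hlam_ge j]
    linarith
  have hg : Matrix.diagonal (fun j => 1 - (lk + μ) * (lamh j + μ)⁻¹) =
      (1 : Matrix (Fin k) (Fin k) ℝ) - (lk + μ) • Matrix.diagonal (fun j => (lamh j + μ)⁻¹) := by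
    ext i j
    by_cases h : i = j <;> simp [Matrix.diagonal_apply, Matrix.one_apply, h]
  have hIP : ((1 : Matrix (Fin n) (Fin n) ℝ) - Pinv).PosSemidef := by
    have h1 : (1 : Matrix (Fin n) (Fin n) ℝ) - Pinv =
        U * Matrix.diagonal (fun j => 1 - (lk + μ) * (lamh j + μ)⁻¹) * Uᵀ := by
      rw [hPinv, hDinv_eq, hg, Matrix.mul_sub, Matrix.sub_mul, Matrix.mul_one,
        Matrix.mul_smul, Matrix.smul_mul]
      abel
    rw [h1]
    have h2 := (Matrix.posSemidef_diagonal_iff.mpr hg0).mul_mul_conjTranspose_same U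
    rwa [Matrix.conjTranspose_eq_transpose_of_trivial] at h2
  have hc1 : 1 ≤ c := by
    have h3 : 0 ≤ w ⬝ᵥ (((1 : Matrix (Fin n) (Fin n) ℝ) - Pinv) *ᵥ w) := by
      simpa using hIP.dotProduct_mulVec_nonneg w
    have h4 : w ⬝ᵥ (Pinv *ᵥ w) = 1 := by
      rw [← hSS, ← Matrix.mulVec_mulVec, symm_dot hSH, hSw, hvv]
    rw [Matrix.sub_mulVec, dotProduct_sub, Matrix.one_mulVec, h4] at h3
    linarith
  have hcpos : 0 < c := lt_of_lt_of_le one_pos hc1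
  have hlminM_le : lmin M ≤ μ + lmin A := by
    set z : Fin n → ℝ := (Real.sqrt c)⁻¹ • w with hz
    have hscpos : 0 < Real.sqrt c := Real.sqrt_pos.mpr hcpos
    have hsc : Real.sqrt c * Real.sqrt c = c := Real.mul_self_sqrt hcpos.le
    have hzz : z ⬝ᵥ z = 1 := by
      rw [hz, smul_dotProduct, dotProduct_smul, smul_eq_mul, smul_eq_mul,
        ← mul_assoc, ← mul_inv]
      rw [hsc, ← hc]
      exact inv_mul_cancel₀ hcpos.ne'
    have hq : z ⬝ᵥ (M *ᵥ z) = c⁻¹ * (μ + lmin A) := by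
      rw [hz, Matrix.mulVec_smul, smul_dotProduct, dotProduct_smul,
        hquadMw, smul_eq_mul, smul_eq_mul, ← mul_assoc, ← mul_inv, hsc]
    calc lmin M ≤ ray M (emb z) := lmin_le M (emb z) (norm_emb_one z hzz)
      _ = z ⬝ᵥ (M *ᵥ z) := ray_emb M z
      _ = c⁻¹ * (μ + lmin A) := hq
      _ ≤ 1 * (μ + lmin A) :=
          mul_le_mul_of_nonneg_right (inv_le_one_of_one_le₀ hc1) hapos.le
      _ = μ + lmin A := one_mul _
  -- M is positive definite
  have hMPD : M.PosDef := by
    refine Matrix.PosDef.of_dotProduct_mulVec_pos ?_ ?_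
    · have hB : (A + μ • (1 : Matrix (Fin n) (Fin n) ℝ)).IsHermitian := hAμ.1
      show (S * (A + μ • 1) * S)ᴴ = S * (A + μ • 1) * S
      rw [Matrix.conjTranspose_mul, Matrix.conjTranspose_mul, hSH.eq, hB.eq, Matrix.mul_assoc]
    · intro y hy
      have hSy : S *ᵥ y ≠ 0 := by
        intro h0
        apply hy
        have hyy : S⁻¹ *ᵥ (S *ᵥ y) = y := by
          rw [Matrix.mulVec_mulVec, Matrix.nonsing_inv_mul _ hdet, Matrix.one_mulVec]
        rw [h0, Matrix.mulVec_zero] at hyy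
        exact hyy.symm
      have hpos := hAμ.dotProduct_mulVec_pos hSy
      show (0 : ℝ) < star y ⬝ᵥ (M *ᵥ y)
      rw [star_trivial, hMdot y]
      simpa using hpos
  have hlminM_pos : 0 < lmin M := by
    obtain ⟨y, hy1, hymin⟩ := lmin_attained M hn
    set vy : Fin n → ℝ := WithLp.equiv 2 (Fin n → ℝ) y with hvy
    have hyemb : emb vy = y := emb_equiv y
    have hvyne : vy ≠ 0 := by
      intro h
      rw [← hyemb, h] at hy1
      simp [emb] at hy1
    have := hMPD.dotProduct_mulVec_pos hvyne
    rw [hymin, ← hyemb, ray_emb]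
    simpa using this
  have hlmaxM_ge : lmin M ≤ lmax M := by
    obtain ⟨y, hy1, hymin⟩ := lmin_attained M hn
    rw [hymin]
    exact le_lmax M y hy1
  rw [max_le_iff]
  constructor
  · rw [le_div_iff₀ hlminM_pos, one_mul]
    exact hlmaxM_ge
  · exact div_le_div₀ (hlminM_pos.trans_le hlmaxM_ge).le hlmax hlminM_pos hlminM_le
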